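/- Let p be prime, n ≥ 1, 1 ≤ k ≤ n, H ⊆ SL₂(ℤ/pⁿℤ) a subgroup, and H_k the image of H in SL₂(ℤ/p^kℤ) under reduction. Then the reduction map induces a bijection between the double coset space I_k(ℤ/pⁿℤ) \ SL₂(ℤ/pⁿℤ) / H and the double coset space Γ₀(ℤ/p^kℤ) \ SL₂(ℤ/p^kℤ) / H_k. -/

import Mathlib

open Matrix

/-- The Borel subgroup `Γ₀(R)` of upper triangular matrices in `SL₂(R)`. -/
def Gamma0 (R : Type*) [CommRing R] : Subgroup (Matrix.SpecialLinearGroup (Fin 2) R) where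
  carrier := {A | A.1 1 0 = 0}
  one_mem' := by simp [Matrix.one_apply]
  mul_mem' := by
    intro a b ha hb
    simp only [Set.mem_setOf_eq] at *
    have : ((a * b : Matrix.SpecialLinearGroup (Fin 2) _)).1 1 0
        = a.1 1 0 * b.1 0 0 + a.1 1 1 * b.1 1 0 := by
      simp [Matrix.mul_apply, Fin.sum_univ_two]
    rw [this, ha, hb]; ring
  inv_mem' := by
    intro a ha
    simp only [Set.mem_setOf_eq] at *
    rw [Matrix.SpecialLinearGroup.SL2_inv_expl]
    simp [ha]

/-- A pair is unimodular (over a local ring) if one of its entries is a unit. -/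
def IsUnimodular {R : Type*} [CommRing R] (v : Fin 2 → R) : Prop :=
  IsUnit (v 0) ∨ IsUnit (v 1)

def P1Setoid (R : Type*) [CommRing R] : Setoid {v : Fin 2 → R // IsUnimodular v} where
  r x y := ∃ u : Rˣ, u • x.1 = y.1
  iseqv := by
    refine ⟨fun x => ⟨1, one_smul _ _⟩, ?_, ?_⟩
    · rintro x y ⟨u, h⟩
      exact ⟨u⁻¹, by rw [← h, inv_smul_smul]⟩
    · rintro x y z ⟨u, h⟩ ⟨w, h2⟩
      exact ⟨w * u, by rw [← h2, ← h]; exact (smul_smul w u x.1).symm ▸ rfl⟩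

/-- The projective line over `R`: unimodular pairs up to unit scaling. -/
def P1 (R : Type*) [CommRing R] := Quotient (P1Setoid R)

def P1.mk {R : Type*} [CommRing R] (v : Fin 2 → R) (h : IsUnimodular v) : P1 R :=
  Quotient.mk (P1Setoid R) ⟨v, h⟩

theorem isUnimodular_mulVec {R : Type*} [CommRing R] [IsLocalRing R]
    (g : Matrix.SpecialLinearGroup (Fin 2) R) {v : Fin 2 → R} (hv : IsUnimodular v) :
    IsUnimodular (g.1.mulVec v) := by
  by_contra h
  rw [IsUnimodular, not_or] at h
  obtain ⟨h0, h1⟩ := h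
  have hv' : v = (g⁻¹).1.mulVec (g.1.mulVec v) := by
    rw [Matrix.mulVec_mulVec, ← Matrix.SpecialLinearGroup.coe_mul, inv_mul_cancel]
    simp
  have key : ∀ i, ¬ IsUnit (v i) := by
    intro i
    rw [hv']
    have hexp : (g⁻¹).1.mulVec (g.1.mulVec v) i
        = (g⁻¹).1 i 0 * (g.1.mulVec v 0) + (g⁻¹).1 i 1 * (g.1.mulVec v 1) := by
      simp [Matrix.mulVec, dotProduct, Fin.sum_univ_two]
    rw [hexp]
    intro hu
    have m0 : (g⁻¹).1 i 0 * (g.1.mulVec v 0) ∈ nonunits R := by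
      intro hc
      exact h0 (isUnit_of_mul_isUnit_right hc)
    have m1 : (g⁻¹).1 i 1 * (g.1.mulVec v 1) ∈ nonunits R := by
      intro hc
      exact h1 (isUnit_of_mul_isUnit_right hc)
    exact (IsLocalRing.nonunits_add m0 m1) hu
  rcases hv with h | h
  · exact key 0 h
  · exact key 1 h

noncomputable instance P1.smul {R : Type*} [CommRing R] [IsLocalRing R] :
    SMul (Matrix.SpecialLinearGroup (Fin 2) R) (P1 R) where
  smul g := Quotient.map
    (fun v => ⟨g.1.mulVec v.1, isUnimodular_mulVec g v.2⟩)
    (by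
      rintro x y ⟨u, h⟩
      refine ⟨u, ?_⟩
      simp only [← h]
      rw [Units.smul_def, Units.smul_def, Matrix.mulVec_smul])

theorem P1.smul_mk {R : Type*} [CommRing R] [IsLocalRing R]
    (g : Matrix.SpecialLinearGroup (Fin 2) R) (v : Fin 2 → R) (h : IsUnimodular v) :
    g • (P1.mk v h) = P1.mk (g.1.mulVec v) (isUnimodular_mulVec g h) := rfl

noncomputable instance P1.mulAction {R : Type*} [CommRing R] [IsLocalRing R] :
    MulAction (Matrix.SpecialLinearGroup (Fin 2) R) (P1 R) where
  one_smul := by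
    intro x
    induction x using Quotient.ind with
    | _ v =>
      show Quotient.map _ _ _ = _
      rw [Quotient.map_mk]
      congr 1
      exact Subtype.ext (by simp)
  mul_smul := by
    intro g h x
    induction x using Quotient.ind with
    | _ v =>
      show Quotient.map _ _ _ = Quotient.map _ _ (Quotient.map _ _ _)
      rw [Quotient.map_mk, Quotient.map_mk, Quotient.map_mk]
      congr 1
      exact Subtype.ext (by simp only [Matrix.SpecialLinearGroup.coe_mul, Matrix.mulVec_mulVec])

theorem zmod_pow_isUnit_iff (p : ℕ) [hp : Fact p.Prime] (n : ℕ) [NeZero n]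
    (x : ZMod (p^n)) : IsUnit x ↔ ¬ (p ∣ x.val) := by
  haveI : NeZero (p^n) := ⟨pow_ne_zero n hp.out.ne_zero⟩
  conv_lhs => rw [← ZMod.natCast_rightInverse x]
  rw [ZMod.isUnit_iff_coprime]
  rw [Nat.coprime_pow_right_iff (Nat.pos_of_ne_zero (NeZero.ne n))]
  rw [Nat.coprime_comm]
  exact hp.out.coprime_iff_not_dvd

instance zmod_pow_isLocalRing (p : ℕ) [hp : Fact p.Prime] (n : ℕ) [NeZero n] :
    IsLocalRing (ZMod (p^n)) := by
  haveI : NeZero (p^n) := ⟨pow_ne_zero n hp.out.ne_zero⟩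
  haveI : Fact (1 < p^n) :=
    ⟨Nat.one_lt_pow (NeZero.ne n) hp.out.one_lt⟩
  refine IsLocalRing.of_nonunits_add ?_
  intro a b ha hb
  rw [mem_nonunits_iff, zmod_pow_isUnit_iff, not_not] at ha hb ⊢
  rw [ZMod.val_add]
  rw [Nat.dvd_mod_iff (dvd_pow_self p (NeZero.ne n))]
  exact Nat.dvd_add ha hb

theorem isUnimodular_pair_left {R : Type*} [CommRing R] {a b : R} (h : IsUnit a) :
    IsUnimodular ![a, b] := Or.inl (by simpa using h)

/-- The Hecke-Iwahori subgroup of level `k`: matrices in `SL₂(ℤ/pⁿℤ)` whose lower-left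
entry is divisible by `p^k`. -/
def Iwahori (p n k : ℕ) : Subgroup (Matrix.SpecialLinearGroup (Fin 2) (ZMod (p ^ n))) where
  carrier := {A | ∃ c, A.1 1 0 = (p : ZMod (p ^ n)) ^ k * c}
  one_mem' := ⟨0, by simp [Matrix.one_apply]⟩
  mul_mem' := by
    rintro a b ⟨c1, h1⟩ ⟨c2, h2⟩
    refine ⟨c1 * b.1 0 0 + a.1 1 1 * c2, ?_⟩
    have e : ((a * b : Matrix.SpecialLinearGroup (Fin 2) _)).1 1 0
        = a.1 1 0 * b.1 0 0 + a.1 1 1 * b.1 1 0 := by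
      simp [Matrix.mul_apply, Fin.sum_univ_two]
    rw [e, h1, h2]; ring
  inv_mem' := by
    rintro a ⟨c, h⟩
    refine ⟨-c, ?_⟩
    rw [Matrix.SpecialLinearGroup.SL2_inv_expl]
    simp [h]

/-- Reduction `SL₂(ℤ/pⁿℤ) →* SL₂(ℤ/p^kℤ)`. -/
noncomputable def redSL (p n k : ℕ) (hkn : k ≤ n) :
    Matrix.SpecialLinearGroup (Fin 2) (ZMod (p ^ n)) →*
      Matrix.SpecialLinearGroup (Fin 2) (ZMod (p ^ k)) :=
  Matrix.SpecialLinearGroup.map (ZMod.castHom (pow_dvd_pow p hkn) (ZMod (p ^ k)))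


theorem cast_eq_zero_iff' (p : ℕ) [Fact p.Prime] (n k : ℕ) [NeZero k] (hkn : k ≤ n)
    (x : ZMod (p ^ n)) :
    ZMod.castHom (pow_dvd_pow p hkn) (ZMod (p ^ k)) x = 0 ↔
      ∃ c, x = (p : ZMod (p ^ n)) ^ k * c := by
  haveI : NeZero n := ⟨fun h => (NeZero.ne k) (Nat.le_zero.mp (h ▸ hkn))⟩
  haveI : NeZero (p ^ n) := ⟨pow_ne_zero n (Fact.out : p.Prime).ne_zero⟩
  haveI : NeZero (p ^ k) := ⟨pow_ne_zero k (Fact.out : p.Prime).ne_zero⟩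
  constructor
  · intro h
    have hx : ((x.val : ℕ) : ZMod (p ^ n)) = x := ZMod.natCast_rightInverse x
    have h2 : ((x.val : ℕ) : ZMod (p ^ k)) = 0 := by
      rw [← map_natCast (ZMod.castHom (pow_dvd_pow p hkn) (ZMod (p ^ k))) x.val, hx, h]
    rw [ZMod.natCast_eq_zero_iff] at h2
    obtain ⟨m, hm⟩ := h2
    exact ⟨(m : ZMod (p ^ n)), by rw [← hx, hm]; push_cast; ring⟩
  · rintro ⟨c, rfl⟩
    rw [_root_.map_mul, map_pow]
    have : (ZMod.castHom (pow_dvd_pow p hkn) (ZMod (p ^ k)) (p : ZMod (p ^ n))) ^ k = 0 := by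
      rw [map_natCast]
      rw [← Nat.cast_pow, ZMod.natCast_self]
    rw [this, zero_mul]

theorem redSL_surjective (p : ℕ) [Fact p.Prime] (n k : ℕ) [NeZero k] (hkn : k ≤ n) :
    Function.Surjective (redSL p n k hkn) := by
  haveI : NeZero n := ⟨fun h => (NeZero.ne k) (Nat.le_zero.mp (h ▸ hkn))⟩
  haveI : NeZero (p ^ n) := ⟨pow_ne_zero n (Fact.out : p.Prime).ne_zero⟩
  haveI : NeZero (p ^ k) := ⟨pow_ne_zero k (Fact.out : p.Prime).ne_zero⟩
  haveI : NeZero (p ^ 1) := ⟨pow_ne_zero 1 (Fact.out : p.Prime).ne_zero⟩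
  intro A
  set f := ZMod.castHom (pow_dvd_pow p hkn) (ZMod (p ^ k)) with hf
  set M : Matrix (Fin 2) (Fin 2) (ZMod (p ^ n)) :=
    Matrix.of (fun i j => (((A.1 i j).val : ℕ) : ZMod (p ^ n))) with hM
  have hMf : ∀ i j, f (M i j) = A.1 i j := by
    intro i j
    show f (((A.1 i j).val : ℕ) : ZMod (p ^ n)) = A.1 i j
    rw [map_natCast]
    exact ZMod.natCast_rightInverse _
  have hdet : f M.det = 1 := by
    have h1 : f M.det = (M.map f).det := by
      rw [Matrix.det_fin_two M, Matrix.det_fin_two (M.map f)]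
      simp only [Matrix.map_apply, _root_.map_mul, map_sub]
    rw [h1]
    have h2 : M.map f = A.1 := by
      ext i j
      exact hMf i j
    rw [h2, A.2]
  have hunit : IsUnit M.det := by
    rw [zmod_pow_isUnit_iff]
    intro hdvd
    have h1 : ((M.det.val : ℕ) : ZMod p) = 0 := by
      rw [ZMod.natCast_eq_zero_iff]
      exact hdvd
    have h2 : ((M.det.val : ℕ) : ZMod p) = 1 := by
      have e1 : ((M.det.val : ℕ) : ZMod (p ^ n)) = M.det := ZMod.natCast_rightInverse _
      have e2 : ((M.det.val : ℕ) : ZMod (p ^ k)) = 1 := by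
        rw [← map_natCast f M.det.val, e1, hdet]
      have e4 := congrArg
        (ZMod.castHom (pow_dvd_pow p (NeZero.one_le (n := k))) (ZMod (p ^ 1))) e2
      rw [map_natCast, _root_.map_one] at e4
      have e3 : ((M.det.val : ℕ) : ZMod (p ^ 1)) = 1 := e4
      rw [pow_one] at e3
      exact e3
    rw [h1] at h2
    exact zero_ne_one h2
  obtain ⟨u, hu⟩ := hunit
  have hfu : f ((u⁻¹ : (ZMod (p ^ n))ˣ) : ZMod (p ^ n)) = 1 := by
    have h1 : f (u : ZMod (p ^ n)) = 1 := by rw [hu, hdet]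
    have h3 := congrArg f u.inv_mul
    rw [_root_.map_mul, h1, mul_one, _root_.map_one] at h3
    exact h3
  set c : ZMod (p ^ n) := ((u⁻¹ : (ZMod (p ^ n))ˣ) : ZMod (p ^ n)) with hc
  set B : Matrix (Fin 2) (Fin 2) (ZMod (p ^ n)) := M.updateRow 0 (c • M 0) with hB
  have hBdet : B.det = 1 := by
    rw [hB, Matrix.det_updateRow_smul, Matrix.updateRow_eq_self, ← hu]
    exact u.inv_mul
  refine ⟨⟨B, hBdet⟩, ?_⟩
  ext i j
  show f (B i j) = A.1 i j
  rw [hB, Matrix.updateRow_apply]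
  by_cases hi : i = 0
  · rw [if_pos hi, Pi.smul_apply, smul_eq_mul, _root_.map_mul, hfu, one_mul, hi]
    exact hMf 0 j
  · rw [if_neg hi]
    exact hMf i j

/-- The reduction map mod `p^k` induces a bijection between the double coset spaces
`I_k(ℤ/pⁿℤ) \\ SL₂(ℤ/pⁿℤ) / H` and `Γ₀(ℤ/p^kℤ) \\ SL₂(ℤ/p^kℤ) / H_k`,
where `H_k` is the image of `H` under reduction. -/
theorem iwahori_doset_equiv_borel_doset (p : ℕ) [Fact p.Prime] (n k : ℕ) [NeZero k]
    (hkn : k ≤ n) (H : Subgroup (Matrix.SpecialLinearGroup (Fin 2) (ZMod (p ^ n)))) :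
    ∃ F : DoubleCoset.Quotient
          (Iwahori p n k : Set (Matrix.SpecialLinearGroup (Fin 2) (ZMod (p ^ n))))
          (H : Set (Matrix.SpecialLinearGroup (Fin 2) (ZMod (p ^ n)))) →
        DoubleCoset.Quotient
          (Gamma0 (ZMod (p ^ k)) : Set (Matrix.SpecialLinearGroup (Fin 2) (ZMod (p ^ k))))
          (H.map (redSL p n k hkn) : Set (Matrix.SpecialLinearGroup (Fin 2) (ZMod (p ^ k)))),
      (∀ g : Matrix.SpecialLinearGroup (Fin 2) (ZMod (p ^ n)),
        F (DoubleCoset.mk (Iwahori p n k) H g)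
          = DoubleCoset.mk (Gamma0 (ZMod (p ^ k))) (H.map (redSL p n k hkn)) (redSL p n k hkn g)) ∧
      Function.Bijective F := by
  have hIG : ∀ a, a ∈ Iwahori p n k → redSL p n k hkn a ∈ Gamma0 (ZMod (p ^ k)) := by
    rintro a ha
    show (redSL p n k hkn a).1 1 0 = 0
    have e : (redSL p n k hkn a).1 1 0
        = ZMod.castHom (pow_dvd_pow p hkn) (ZMod (p ^ k)) (a.1 1 0) := rfl
    rw [e]
    exact (cast_eq_zero_iff' p n k hkn _).mpr ha
  have hGI : ∀ a, redSL p n k hkn a ∈ Gamma0 (ZMod (p ^ k)) → a ∈ Iwahori p n k := by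
    intro a ha
    have e : (redSL p n k hkn a).1 1 0
        = ZMod.castHom (pow_dvd_pow p hkn) (ZMod (p ^ k)) (a.1 1 0) := rfl
    have h0 : ZMod.castHom (pow_dvd_pow p hkn) (ZMod (p ^ k)) (a.1 1 0) = 0 := by
      rw [← e]; exact ha
    exact (cast_eq_zero_iff' p n k hkn _).mp h0
  have hwd : ∀ x y : Matrix.SpecialLinearGroup (Fin 2) (ZMod (p ^ n)),
      DoubleCoset.setoid (Iwahori p n k : Set _) (H : Set _) x y →
      DoubleCoset.setoid (Gamma0 (ZMod (p ^ k)) : Set _) (H.map (redSL p n k hkn) : Set _)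
        (redSL p n k hkn x) (redSL p n k hkn y) := by
    intro x y hxy
    rw [DoubleCoset.rel_iff] at hxy ⊢
    obtain ⟨a, ha, b, hb, rfl⟩ := hxy
    exact ⟨redSL p n k hkn a, hIG a ha, redSL p n k hkn b, ⟨b, hb, rfl⟩, by
      simp [_root_.map_mul]⟩
  refine ⟨Quotient.map' (redSL p n k hkn) hwd, fun g => rfl, ?_, ?_⟩
  · intro x y hxy
    induction x using Quotient.inductionOn' with
    | h g₁ =>
    induction y using Quotient.inductionOn' with
    | h g₂ =>
    have h2 : DoubleCoset.mk (Gamma0 (ZMod (p ^ k))) (H.map (redSL p n k hkn)) (redSL p n k hkn g₁)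
        = DoubleCoset.mk (Gamma0 (ZMod (p ^ k))) (H.map (redSL p n k hkn)) (redSL p n k hkn g₂) := hxy
    rw [DoubleCoset.eq] at h2
    obtain ⟨b, hb, -, ⟨h0, hh0, rfl⟩, heq⟩ := h2
    show DoubleCoset.mk (Iwahori p n k) H g₁ = DoubleCoset.mk (Iwahori p n k) H g₂
    rw [DoubleCoset.eq]
    refine ⟨g₂ * h0⁻¹ * g₁⁻¹, ?_, h0, hh0, by group⟩
    apply hGI
    have : redSL p n k hkn (g₂ * h0⁻¹ * g₁⁻¹)
        = redSL p n k hkn g₂ * (redSL p n k hkn h0)⁻¹ * (redSL p n k hkn g₁)⁻¹ := by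
      simp [_root_.map_mul, map_inv]
    rw [this, heq]
    have e2 : b * redSL p n k hkn g₁ * redSL p n k hkn h0 * (redSL p n k hkn h0)⁻¹ *
        (redSL p n k hkn g₁)⁻¹ = b := by group
    rw [e2]
    exact hb
  · intro q
    obtain ⟨g, hg⟩ := redSL_surjective p n k hkn q.out
    refine ⟨DoubleCoset.mk (Iwahori p n k) H g, ?_⟩
    have : Quotient.map' (redSL p n k hkn) hwd (DoubleCoset.mk (Iwahori p n k) H g)
        = DoubleCoset.mk (Gamma0 (ZMod (p ^ k))) (H.map (redSL p n k hkn)) (redSL p n k hkn g) := rfl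
    rw [this, hg]
    exact DoubleCoset.out_eq' _ _ q
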